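/- Let states, transitions, step, and reach be as in the DBakery protocol with initial state (∅, ∅), and define c (W, U) := (∃ n ∈ W, ∀ x ∈ W ∪ U, n ≤ x) ∧ U ≠ ∅. Then for every reachable state S, ¬ c S: in no reachable state does a waiting process hold the globally minimal counter while the resource is in use. -/
import Mathlib


abbrev State := Finset ℕ × Finset ℕ

def unsafe' (S : State) : Prop := ∃ n₁ ∈ S.2, ∃ n₂ ∈ S.2, n₁ ≠ n₂

def cre (S S' : State) : Prop :=
  S'.2 = S.2 ∧ ((S.1 ∪ S.2 = ∅ ∧ S'.1 = {0}) ∨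
    (S.1 ∪ S.2 ≠ ∅ ∧ ∃ m, (∀ x ∈ S.1 ∪ S.2, x ≤ m) ∧ m ∈ S.1 ∪ S.2 ∧ S'.1 = insert (m + 1) S.1))

def use (S S' : State) : Prop :=
  ∃ n ∈ S.1, (∀ x ∈ S.1 ∪ S.2, n ≤ x) ∧ S'.1 = S.1.erase n ∧ S'.2 = insert n S.2

def rel (S S' : State) : Prop :=
  S'.1 = S.1 ∧ ∃ n ∈ S.2, S'.2 = S.2.erase n

def c (S : State) : Prop := (∃ n ∈ S.1, ∀ x ∈ S.1 ∪ S.2, n ≤ x) ∧ S.2 ≠ ∅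

def step (S S' : State) : Prop := cre S S' ∨ use S S' ∨ rel S S'

def reach (S : State) : Prop := Relation.ReflTransGen step (∅, ∅) S

def inv (S : State) : Prop := ∀ u ∈ S.2, ∀ w ∈ S.1, u < w

lemma inv_step {S S' : State} (hi : inv S) (hs : step S S') : inv S' := by
  rcases hs with ⟨h2, hc⟩ | ⟨n, hn, hmin, h1, h2⟩ | ⟨h1, n, hn, h2⟩
  · rcases hc with ⟨he, h1⟩ | ⟨_, m, hmax, hm, h1⟩
    · intro u hu
      rw [h2] at hu
      simp [(Finset.union_eq_empty.mp he).2] at hu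
    · intro u hu w hw
      rw [h2] at hu
      rw [h1, Finset.mem_insert] at hw
      rcases hw with rfl | hw
      · exact Nat.lt_succ_of_le (hmax u (Finset.mem_union_right _ hu))
      · exact hi u hu w hw
  · intro u hu w hw
    rw [h2, Finset.mem_insert] at hu
    rw [h1, Finset.mem_erase] at hw
    rcases hu with rfl | hu
    · exact lt_of_le_of_ne (hmin w (Finset.mem_union_left _ hw.2)) (Ne.symm hw.1)
    · exact hi u hu w hw.2
  · intro u hu w hw
    rw [h2, Finset.mem_erase] at hu
    rw [h1] at hw
    exact hi u hu.2 w hw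

lemma inv_reach {S : State} (h : reach S) : inv S := by
  induction h with
  | refl => intro u hu; simp at hu
  | tail _ hs ih => exact inv_step ih hs

theorem not_c_reachable (S : State) (h : reach S) : ¬ c S := by
  have hi := inv_reach h
  rintro ⟨⟨n, hn, hmin⟩, hne⟩
  obtain ⟨u, hu⟩ := Finset.nonempty_iff_ne_empty.2 hne
  exact absurd (hmin u (Finset.mem_union_right _ hu)) (not_le_of_gt (hi u hu n hn))
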